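/- Let α, β ∈ (0, π/2) with α ≠ β and α + β ≠ π/2, and γ = π/4. Then all four vectors a₁, a₂, a₃, a₄ of the ensemble A_{π/4}^[α,β] are entangled, i.e., none is a product vector. -/

import Mathlib

noncomputable section

open scoped ComplexOrder

/-- The two-qubit Hilbert space ℂ² ⊗ ℂ², modeled as ℂ^(2×2) with the standard inner product. -/
abbrev TwoQubit : Type := EuclideanSpace ℂ (Fin 2 × Fin 2)

/-- The computational basis vector |ab⟩. -/
def ket (a b : Fin 2) : TwoQubit := EuclideanSpace.single (a, b) 1

/-- A vector is a product vector if it is of the form u ⊗ w. -/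
def IsProductVec (v : TwoQubit) : Prop :=
  ∃ u w : Fin 2 → ℂ, ∀ a b : Fin 2, v (a, b) = u a * w b

/-- The 2×2 coefficient matrix of a vector in ℂ² ⊗ ℂ². -/
def coeffMat (v : TwoQubit) : Matrix (Fin 2) (Fin 2) ℂ :=
  Matrix.of fun a b => v (a, b)

/-- The state a₁ = cos α |00⟩ − sin α |11⟩ of the ensemble A_γ^[α,β]. -/
def aVec1 (α : ℝ) : TwoQubit :=
  (Real.cos α : ℂ) • ket 0 0 - (Real.sin α : ℂ) • ket 1 1

/-- The state a₂ = cos β |01⟩ − sin β |10⟩ of the ensemble A_γ^[α,β]. -/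
def aVec2 (β : ℝ) : TwoQubit :=
  (Real.cos β : ℂ) • ket 0 1 - (Real.sin β : ℂ) • ket 1 0

/-- The state a₃ = sin γ sin α |00⟩ + cos γ sin β |01⟩ + cos γ cos β |10⟩ + sin γ cos α |11⟩. -/
def aVec3 (α β γ : ℝ) : TwoQubit :=
  ((Real.sin γ * Real.sin α : ℝ) : ℂ) • ket 0 0 + ((Real.cos γ * Real.sin β : ℝ) : ℂ) • ket 0 1 +
  ((Real.cos γ * Real.cos β : ℝ) : ℂ) • ket 1 0 + ((Real.sin γ * Real.cos α : ℝ) : ℂ) • ket 1 1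

/-- The state a₄ = cos γ sin α |00⟩ − sin γ sin β |01⟩ − sin γ cos β |10⟩ + cos γ cos α |11⟩. -/
def aVec4 (α β γ : ℝ) : TwoQubit :=
  ((Real.cos γ * Real.sin α : ℝ) : ℂ) • ket 0 0 - ((Real.sin γ * Real.sin β : ℝ) : ℂ) • ket 0 1 -
  ((Real.sin γ * Real.cos β : ℝ) : ℂ) • ket 1 0 + ((Real.cos γ * Real.cos α : ℝ) : ℂ) • ket 1 1

lemma prodDet {v : TwoQubit} (h : IsProductVec v) :
    v (0,0) * v (1,1) = v (0,1) * v (1,0) := by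
  obtain ⟨u, w, hw⟩ := h
  rw [hw 0 0, hw 1 1, hw 0 1, hw 1 0]; ring

lemma key (α β : ℝ) (hα : α ∈ Set.Ioo 0 (Real.pi / 2))
    (hβ : β ∈ Set.Ioo 0 (Real.pi / 2)) (hne : α ≠ β) (hsum : α + β ≠ Real.pi / 2) :
    Real.sin α * Real.cos α ≠ Real.sin β * Real.cos β := by
  intro h
  have h2 : Real.sin (2*α) - Real.sin (2*β) = 0 := by
    rw [Real.sin_two_mul, Real.sin_two_mul]; linarith
  rw [Real.sin_sub_sin] at h2
  have hpi := Real.pi_pos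
  obtain ⟨hα1, hα2⟩ := hα; obtain ⟨hβ1, hβ2⟩ := hβ
  rcases mul_eq_zero.mp h2 with h3 | h3
  · rcases mul_eq_zero.mp h3 with h4 | h4
    · norm_num at h4
    · have : (2*α - 2*β)/2 = α - β := by ring
      rw [this] at h4
      obtain ⟨n, hn⟩ := Real.sin_eq_zero_iff.mp h4
      have hb : |α - β| < Real.pi := by
        rw [abs_lt]; constructor <;> linarith
      have : n = 0 := by
        by_contra hn0
        have : (1:ℝ) ≤ |(n:ℝ)| := by
          exact_mod_cast Int.one_le_abs (by exact_mod_cast hn0)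
        have : Real.pi ≤ |(n:ℝ) * Real.pi| := by
          rw [abs_mul, abs_of_pos hpi]; nlinarith
        rw [hn] at this; linarith
      rw [this] at hn; simp at hn
      exact hne (by linarith)
  · have : (2*α + 2*β)/2 = α + β := by ring
    rw [this] at h3
    obtain ⟨k, hk⟩ := Real.cos_eq_zero_iff.mp h3
    have hb1 : 0 < α + β := by linarith
    have hb2 : α + β < Real.pi := by linarith
    have : k = 0 := by
      by_contra hk0
      rcases lt_or_gt_of_ne (by exact_mod_cast hk0 : (k:ℝ) ≠ 0) with h | h
      · have : (k:ℝ) ≤ -1 := by exact_mod_cast Int.le_of_lt_add_one (by exact_mod_cast h)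
        nlinarith
      · have : (1:ℝ) ≤ (k:ℝ) := by exact_mod_cast h
        nlinarith
    rw [this] at hk; norm_num at hk
    exact hsum hk

lemma ket_apply (a b c d : Fin 2) :
    ket a b (c, d) = if (c, d) = (a, b) then 1 else 0 := by
  simp [ket, EuclideanSpace.single_apply]

/-- For α, β ∈ (0, π/2) with α ≠ β and α + β ≠ π/2, all four states of
A_{π/4}^[α,β] are entangled. -/
theorem stmt17 (α β : ℝ) (hα : α ∈ Set.Ioo 0 (Real.pi / 2))
    (hβ : β ∈ Set.Ioo 0 (Real.pi / 2)) (hne : α ≠ β) (hsum : α + β ≠ Real.pi / 2) :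
    ¬ IsProductVec (aVec1 α) ∧ ¬ IsProductVec (aVec2 β) ∧
    ¬ IsProductVec (aVec3 α β (Real.pi / 4)) ∧ ¬ IsProductVec (aVec4 α β (Real.pi / 4)) := by
  obtain ⟨hα1, hα2⟩ := hα; obtain ⟨hβ1, hβ2⟩ := hβ
  have hsa : 0 < Real.sin α := Real.sin_pos_of_pos_of_lt_pi hα1 (by linarith [Real.pi_pos])
  have hca : 0 < Real.cos α := Real.cos_pos_of_mem_Ioo ⟨by linarith [Real.pi_pos], hα2⟩
  have hsb : 0 < Real.sin β := Real.sin_pos_of_pos_of_lt_pi hβ1 (by linarith [Real.pi_pos])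
  have hcb : 0 < Real.cos β := Real.cos_pos_of_mem_Ioo ⟨by linarith [Real.pi_pos], hβ2⟩
  have hk := key α β ⟨hα1, hα2⟩ ⟨hβ1, hβ2⟩ hne hsum
  have hc4 : Real.cos (Real.pi / 4) = Real.sqrt 2 / 2 := Real.cos_pi_div_four
  have hs4 : Real.sin (Real.pi / 4) = Real.sqrt 2 / 2 := Real.sin_pi_div_four
  have h2 : (Real.sqrt 2 / 2) * (Real.sqrt 2 / 2) = 1/2 := by
    rw [div_mul_div_comm, Real.mul_self_sqrt (by norm_num)]; norm_num
  refine ⟨?_, ?_, ?_, ?_⟩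
  · intro h
    have hd := prodDet h
    simp only [aVec1, PiLp.sub_apply, PiLp.smul_apply, ket_apply, smul_eq_mul] at hd
    norm_num [Prod.ext_iff, Fin.ext_iff] at hd
    have : Real.cos α = 0 ∨ Real.sin α = 0 := by exact_mod_cast hd
    rcases this with h' | h' <;> linarith
  · intro h
    have hd := prodDet h
    simp only [aVec2, PiLp.sub_apply, PiLp.smul_apply, ket_apply, smul_eq_mul] at hd
    norm_num [Prod.ext_iff, Fin.ext_iff] at hd
    have : Real.cos β = 0 ∨ Real.sin β = 0 := by exact_mod_cast hd
    rcases this with h' | h' <;> linarith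
  · intro h
    have hd := prodDet h
    simp only [aVec3, PiLp.add_apply, PiLp.smul_apply, ket_apply, smul_eq_mul, hc4, hs4] at hd
    norm_num [Prod.ext_iff, Fin.ext_iff] at hd
    have hd' : (Real.sqrt 2 / 2 * Real.sin α) * (Real.sqrt 2 / 2 * Real.cos α)
        = (Real.sqrt 2 / 2 * Real.sin β) * (Real.sqrt 2 / 2 * Real.cos β) := by
      apply Complex.ofReal_injective; push_cast; linear_combination hd
    apply hk; nlinarith [hd', h2]
  · intro h
    have hd := prodDet h
    simp only [aVec4, PiLp.add_apply, PiLp.sub_apply, PiLp.smul_apply, ket_apply,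
      smul_eq_mul, hc4, hs4] at hd
    norm_num [Prod.ext_iff, Fin.ext_iff] at hd
    have hd' : (Real.sqrt 2 / 2 * Real.sin α) * (Real.sqrt 2 / 2 * Real.cos α)
        = (Real.sqrt 2 / 2 * Real.sin β) * (Real.sqrt 2 / 2 * Real.cos β) := by
      apply Complex.ofReal_injective; push_cast; linear_combination hd
    apply hk; nlinarith [hd', h2]
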